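/- arXiv:1210.1461 — 2 statements merged into one kernel-verified Lean document; each statement's English description precedes it below -/
import Mathlib

section
/- Let A be an m×n real matrix and R an r×n real matrix with rank(A R⁺ R) = rank(R) = ρ. If v_j is a right singular vector of A R⁺ R corresponding to a nonzero singular value, then A R⁺ R v_j = A v_j, where R⁺ denotes the Moore-Penrose pseudoinverse of R. -/
open Matrix BigOperators

def IsMPInv {m n : Type*} [Fintype m] [Fintype n] (A : Matrix m n ℝ) (B : Matrix n m ℝ) : Prop :=
  A * B * A = A ∧ B * A * B = B ∧ (A * B)ᵀ = A * B ∧ (B * A)ᵀ = B * A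

-- The Moore-Penrose pseudoinverse (it exists and is unique for real matrices).
open Classical in
noncomputable def mpinv {m n : Type*} [Fintype m] [Fintype n] (A : Matrix m n ℝ) : Matrix n m ℝ :=
  if h : ∃ B, IsMPInv A B then h.choose else 0

/-- Squared Frobenius norm. -/
def frobSq {m n : Type*} [Fintype m] [Fintype n] (A : Matrix m n ℝ) : ℝ :=
  ∑ i, ∑ j, (A i j) ^ 2

/-- Frobenius norm. -/
noncomputable def frob {m n : Type*} [Fintype m] [Fintype n] (A : Matrix m n ℝ) : ℝ :=
  Real.sqrt (frobSq A)

/-- If `rank (A R⁺ R) = rank R = ρ` and `v` is a right singular vector of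
`A R⁺ R` corresponding to a nonzero singular value `σ` (i.e. a unit vector with
`(A R⁺ R)ᵀ (A R⁺ R) v = σ² v`), then `A R⁺ R v = A v`. -/
theorem stmt0 {m n r ρ : ℕ} (A : Matrix (Fin m) (Fin n) ℝ) (R : Matrix (Fin r) (Fin n) ℝ)
    (hrankAR : (A * mpinv R * R).rank = ρ) (hrankR : R.rank = ρ)
    (v : Fin n → ℝ) (σ : ℝ) (hσ : 0 < σ)
    (hunit : ∑ t, (v t) ^ 2 = 1)
    (hsing : ((A * mpinv R * R)ᵀ * (A * mpinv R * R)) *ᵥ v = (σ ^ 2) • v) :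
    (A * mpinv R * R) *ᵥ v = A *ᵥ v := by
  by_cases h : ∃ B, IsMPInv R B
  · obtain ⟨h1, h2, h3, h4⟩ := h.choose_spec
    have hB : mpinv R = h.choose := by simp [mpinv, h]
    set B := h.choose with hBdef
    rw [hB] at hsing ⊢
    set P : Matrix (Fin n) (Fin n) ℝ := B * R with hP
    have hPsym : Pᵀ = P := h4
    have hPP : P * P = P := by
      rw [hP, Matrix.mul_assoc, ← Matrix.mul_assoc R, h1]
    have hRB : Rᵀ * Bᵀ = P := by rw [← transpose_mul, ← hP, hPsym]
    have hTrans : (A * B * R)ᵀ = P * Aᵀ := by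
      rw [transpose_mul, transpose_mul, ← Matrix.mul_assoc, hRB]
    have hMat : P * ((A * B * R)ᵀ * (A * B * R)) = (A * B * R)ᵀ * (A * B * R) := by
      rw [hTrans, ← Matrix.mul_assoc P (P * Aᵀ), ← Matrix.mul_assoc P P Aᵀ, hPP]
    have key : P *ᵥ v = v := by
      have h5 : P *ᵥ (((A * B * R)ᵀ * (A * B * R)) *ᵥ v)
          = ((A * B * R)ᵀ * (A * B * R)) *ᵥ v := by
        rw [mulVec_mulVec, hMat]
      rw [hsing, mulVec_smul] at h5
      have hσ2 : (σ ^ 2) ≠ 0 := by positivity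
      exact smul_right_injective _ hσ2 h5
    have : A * B * R = A * P := by rw [hP, Matrix.mul_assoc]
    rw [this, ← mulVec_mulVec, key]
  · exfalso
    have hB : mpinv R = 0 := by simp [mpinv, h]
    rw [hB] at hsing
    simp only [Matrix.mul_zero, Matrix.zero_mul, transpose_zero, zero_mulVec] at hsing
    have hσ2 : (σ ^ 2) ≠ 0 := by positivity
    have hv : v = 0 := by
      have := hsing.symm
      rwa [smul_eq_zero, or_iff_right hσ2] at this
    rw [hv] at hunit
    simp at hunit
end

section
/- (Adaptive sampling bound, column version.) Let A ∈ ℝ^{m×n}, and let R ∈ ℝ^{r×n} consist of rows of A with rank(R) = rank(A R⁺ R) = ρ. Let C₁ ∈ ℝ^{m×c₁} consist of c₁ columns of A, set B = A − C₁C₁⁺A, and define sampling probabilities p_i = ‖b_i‖₂²/‖B‖_F² over columns i = 1,…,n. Sample c₂ columns of A i.i.d. according to (p_i), forming C₂, and set C = [C₁, C₂]. Then E‖A − C C⁺ A R⁺ R‖_F² ≤ ‖A − A R⁺ R‖_F² + (ρ/c₂)·‖A − C₁C₁⁺A‖_F², where the expectation is over C₂. -/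
open Matrix BigOperators

lemma sym_mpinv_exists {k : Type*} [Fintype k] [DecidableEq k] (S : Matrix k k ℝ)
    (hS : Sᵀ = S) : ∃ T : Matrix k k ℝ, IsMPInv S T ∧ Tᵀ = T ∧ S * T = T * S := by
  have hH : S.IsHermitian := by
    rw [Matrix.IsHermitian, conjTranspose_eq_transpose_of_trivial, hS]
  have h1 := hH.spectral_theorem
  simp only [RCLike.ofReal_real_eq_id, Function.comp_id, Function.id_comp,
    Unitary.conjStarAlgAut_apply] at h1
  set U : Matrix k k ℝ := (hH.eigenvectorUnitary : Matrix k k ℝ) with hU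
  have h2 : U * star U = 1 := by
    have := (hH.eigenvectorUnitary).2; rwa [Matrix.mem_unitaryGroup_iff] at this
  have h3 : star U * U = 1 := by
    have := (hH.eigenvectorUnitary).2; rwa [Matrix.mem_unitaryGroup_iff'] at this
  set lam := hH.eigenvalues with hlam
  have hdd : ∀ (f g : k → ℝ), (U * diagonal f * star U) * (U * diagonal g * star U)
      = U * diagonal (fun i => f i * g i) * star U := by
    intro f g
    rw [show U * diagonal f * star U * (U * diagonal g * star U)
      = U * diagonal f * (star U * U) * (diagonal g * star U) by
        simp only [Matrix.mul_assoc]]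
    rw [h3, mul_one, show U * diagonal f * (diagonal g * star U)
      = U * (diagonal f * diagonal g) * star U by simp only [Matrix.mul_assoc]]
    rw [Matrix.diagonal_mul_diagonal]
  have htr : ∀ (f : k → ℝ), (U * diagonal f * star U)ᵀ = U * diagonal f * star U := by
    intro f
    rw [← conjTranspose_eq_transpose_of_trivial, conjTranspose_mul, conjTranspose_mul,
      ← Matrix.star_eq_conjTranspose, ← Matrix.star_eq_conjTranspose,
      ← Matrix.star_eq_conjTranspose, star_star]
    have : star (diagonal f) = diagonal f := by
      rw [Matrix.star_eq_conjTranspose, diagonal_conjTranspose]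
      simp [star_trivial]
    rw [this, Matrix.mul_assoc]
  refine ⟨U * Matrix.diagonal (fun i => (lam i)⁻¹) * star U, ⟨?_, ?_, ?_, ?_⟩, ?_, ?_⟩
  · rw [h1, hdd, hdd]
    congr 2
    ext i
    by_cases h : lam i = 0 <;> field_simp [h]
  · rw [h1, hdd, hdd]
    congr 2
    ext i
    by_cases h : lam i = 0 <;> field_simp [h]
  · rw [h1, hdd]; exact htr _
  · rw [h1, hdd]; exact htr _
  · exact htr _
  · rw [h1, hdd, hdd]
    congr 2
    ext i j
    simp only [diagonal]
    by_cases h : i = j <;> simp [h, mul_comm]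

lemma mpinv_exists {m n : Type*} [Fintype m] [Fintype n] (A : Matrix m n ℝ) :
    ∃ B, IsMPInv A B := by
  classical
  obtain ⟨T, ⟨hGTG, hTGT, _, _⟩, hTsym, hcomm⟩ := sym_mpinv_exists (Aᵀ * A)
    (by rw [transpose_mul, transpose_transpose])
  set G := Aᵀ * A with hG
  have hAK : A * (T * G) = A := by
    have hGK : G * (T * G) = G := by rw [← Matrix.mul_assoc]; exact hGTG
    set K : Matrix n n ℝ := 1 - T * G with hK
    have hGK0 : G * K = 0 := by rw [hK, Matrix.mul_sub, Matrix.mul_one, hGK, sub_self]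
    have h0 : (A * K)ᵀ * (A * K) = 0 := by
      rw [transpose_mul, Matrix.mul_assoc, ← Matrix.mul_assoc Aᵀ, ← hG, hGK0,
        Matrix.mul_zero]
    have hAK0 : A * K = 0 := by
      have := Matrix.conjTranspose_mul_self_eq_zero (A := A * K)
      rw [← this, ← h0, conjTranspose_eq_transpose_of_trivial]
    have : A * K = A - A * (T * G) := by rw [hK, Matrix.mul_sub, Matrix.mul_one]
    rw [this] at hAK0
    exact (sub_eq_zero.mp hAK0).symm
  refine ⟨T * Aᵀ, ?_, ?_, ?_, ?_⟩
  · rw [show A * (T * Aᵀ) * A = A * (T * G) by rw [hG]; simp only [Matrix.mul_assoc], hAK]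
  · rw [show T * Aᵀ * A * (T * Aᵀ) = (T * G * T) * Aᵀ by rw [hG]; simp only [Matrix.mul_assoc],
      hTGT]
  · rw [show A * (T * Aᵀ) = A * T * Aᵀ by simp only [Matrix.mul_assoc]]
    rw [transpose_mul, transpose_mul, transpose_transpose, hTsym, Matrix.mul_assoc]
  · rw [show T * Aᵀ * A = T * G by rw [hG]; simp only [Matrix.mul_assoc]]
    have hGsym : Gᵀ = G := by rw [hG, transpose_mul, transpose_transpose]
    rw [transpose_mul, hTsym, hGsym, hcomm]

lemma mpinv_spec {m n : Type*} [Fintype m] [Fintype n] (A : Matrix m n ℝ) :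
    IsMPInv A (mpinv A) := by
  rw [mpinv, dif_pos (mpinv_exists A)]
  exact (mpinv_exists A).choose_spec
lemma proj_orthonormal_decomp {n ρ : ℕ} (Q : Matrix (Fin n) (Fin n) ℝ)
    (hsym : Qᵀ = Q) (hidem : Q * Q = Q) (hrk : Q.rank = ρ) :
    ∃ v : Fin ρ → (Fin n → ℝ),
      (∀ s t, (∑ j, v s j * v t j) = if s = t then 1 else 0) ∧
      (∀ a b, Q a b = ∑ t, v t a * v t b) := by
  have hH : Q.IsHermitian := by
    rw [Matrix.IsHermitian, conjTranspose_eq_transpose_of_trivial, hsym]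
  have h1 := hH.spectral_theorem
  simp only [RCLike.ofReal_real_eq_id, Function.comp_id, Function.id_comp,
    Unitary.conjStarAlgAut_apply] at h1
  set U : Matrix (Fin n) (Fin n) ℝ := (hH.eigenvectorUnitary : Matrix (Fin n) (Fin n) ℝ) with hU
  have h2 : U * star U = 1 := by
    have := (hH.eigenvectorUnitary).2; rwa [Matrix.mem_unitaryGroup_iff] at this
  have h3 : star U * U = 1 := by
    have := (hH.eigenvectorUnitary).2; rwa [Matrix.mem_unitaryGroup_iff'] at this
  set lam := hH.eigenvalues with hlam
  -- eigenvalues are 0 or 1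
  have hd := hH.conjStarAlgAut_star_eigenvectorUnitary
  simp only [RCLike.ofReal_real_eq_id, Function.comp_id, Function.id_comp,
    Unitary.conjStarAlgAut_apply, Unitary.coe_star, star_star] at hd
  rw [← hU, ← hlam] at hd
  have hlam01 : ∀ j, lam j = 0 ∨ lam j = 1 := by
    intro j
    have : (diagonal lam) * (diagonal lam) = diagonal lam := by
      conv_lhs => rw [← hd]
      rw [show star U * Q * U * (star U * Q * U) = star U * Q * (U * star U) * (Q * U) by
        simp only [Matrix.mul_assoc]]
      rw [h2, Matrix.mul_one, show star U * Q * (Q * U) = star U * (Q * Q) * U by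
        simp only [Matrix.mul_assoc]]
      rw [hidem, hd]
    rw [Matrix.diagonal_mul_diagonal] at this
    rw [← Matrix.ext_iff] at this
    have := this j j
    simp only [Matrix.diagonal_apply_eq] at this
    have h0 : lam j * (lam j - 1) = 0 := by ring_nf; linarith
    rcases mul_eq_zero.mp h0 with h | h
    · exact Or.inl h
    · right; linarith
  -- the rank condition
  have hcard : Fintype.card {i // lam i ≠ 0} = ρ := by
    rw [← hH.rank_eq_card_non_zero_eigs, hrk]
  have e : Fin ρ ≃ {i // lam i ≠ 0} := (Fintype.equivFinOfCardEq hcard).symm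
  have hinj : Function.Injective (fun t => (e t : Fin n)) := fun s t hst => by
    apply e.injective; exact Subtype.ext hst
  refine ⟨fun t a => U a (e t), ?_, ?_⟩
  · intro s t
    rw [← Matrix.ext_iff] at h3
    have := h3 (e s) (e t)
    rw [Matrix.mul_apply] at this
    simp only [Matrix.star_apply, star_trivial] at this
    rw [this]
    rcases eq_or_ne s t with h | h
    · simp [h, Matrix.one_apply]
    · have : (e s : Fin n) ≠ (e t : Fin n) := fun hc => h (hinj hc)
      simp [Matrix.one_apply, this, h]
  · intro a b
    have hQab : Q a b = ∑ j, U a j * lam j * U b j := by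
      conv_lhs => rw [h1]
      rw [Matrix.mul_apply]
      congr 1; ext j
      rw [Matrix.mul_diagonal]
      simp [Matrix.star_apply, star_trivial, mul_comm, mul_assoc, mul_left_comm]
    rw [hQab]
    have step1 : ∑ j, U a j * lam j * U b j
        = ∑ j, (if lam j ≠ 0 then U a j * U b j else 0) := by
      apply Finset.sum_congr rfl
      intro j _
      rcases hlam01 j with h | h <;> simp [h]
    rw [step1, Finset.sum_ite, Finset.sum_const_zero, add_zero]
    have hsub : (∑ x ∈ Finset.filter (fun x => lam x ≠ 0) Finset.univ, U a x * U b x)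
        = ∑ s : {i // lam i ≠ 0}, U a (s : Fin n) * U b (s : Fin n) :=
      Finset.sum_subtype (Finset.filter (fun x => lam x ≠ 0) Finset.univ)
        (fun j => by simp) (fun j => U a j * U b j)
    rw [hsub]
    exact (Equiv.sum_comp e (fun s : {i // lam i ≠ 0} => U a (s : Fin n) * U b (s : Fin n))).symm
def frobInner {m n : Type*} [Fintype m] [Fintype n] (X Y : Matrix m n ℝ) : ℝ :=
  ∑ i, ∑ j, X i j * Y i j

lemma frobSq_nonneg {m n : Type*} [Fintype m] [Fintype n] (A : Matrix m n ℝ) :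
    0 ≤ frobSq A :=
  Finset.sum_nonneg fun i _ => Finset.sum_nonneg fun j _ => sq_nonneg _

lemma frobSq_add {m n : Type*} [Fintype m] [Fintype n] (X Y : Matrix m n ℝ) :
    frobSq (X + Y) = frobSq X + 2 * frobInner X Y + frobSq Y := by
  simp only [frobSq, frobInner, Matrix.add_apply, Finset.mul_sum, ← Finset.sum_add_distrib]
  apply Finset.sum_congr rfl; intro i _
  apply Finset.sum_congr rfl; intro j _
  ring

lemma frobInner_eq_trace {m n : Type*} [Fintype m] [Fintype n] (X Y : Matrix m n ℝ) :
    frobInner X Y = Matrix.trace (X * Yᵀ) := by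
  simp only [frobInner, Matrix.trace, Matrix.diag, Matrix.mul_apply, Matrix.transpose_apply]

lemma frobInner_eq_trace' {m n : Type*} [Fintype m] [Fintype n] (X Y : Matrix m n ℝ) :
    frobInner X Y = Matrix.trace (Xᵀ * Y) := by
  simp only [frobInner, Matrix.trace, Matrix.diag, Matrix.mul_apply, Matrix.transpose_apply]
  exact Finset.sum_comm

lemma split1 {m n : Type*} [Fintype m] [Fintype n] (A : Matrix m n ℝ) (Qm : Matrix n n ℝ)
    (P : Matrix m m ℝ) (hQsym : Qmᵀ = Qm) (hQQ : Qm * Qm = Qm) :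
    frobSq (A - P * A * Qm) = frobSq (A - A * Qm) + frobSq (A * Qm - P * (A * Qm)) := by
  have hXY : A - P * A * Qm = (A - A * Qm) + (A * Qm - P * (A * Qm)) := by
    simp only [Matrix.mul_assoc]; abel
  rw [hXY, frobSq_add]
  have hcross : frobInner (A - A * Qm) (A * Qm - P * (A * Qm)) = 0 := by
    rw [frobInner_eq_trace]
    have : (A - A * Qm) * (A * Qm - P * (A * Qm))ᵀ = 0 := by
      have h1 : (A * Qm - P * (A * Qm))ᵀ = Qm * (A - P * A)ᵀ := by
        rw [show A * Qm - P * (A * Qm) = (A - P * A) * Qm by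
          rw [Matrix.sub_mul, Matrix.mul_assoc]]
        rw [Matrix.transpose_mul, hQsym]
      rw [h1, show (A - A * Qm) * (Qm * (A - P * A)ᵀ) = (A * Qm - A * (Qm * Qm)) * (A - P * A)ᵀ by
        simp only [Matrix.sub_mul, Matrix.mul_sub, Matrix.mul_assoc]]
      rw [hQQ, sub_self, Matrix.zero_mul]
    rw [this, Matrix.trace_zero]
  rw [hcross]; ring

lemma split2aux {m n : Type*} [Fintype m] [Fintype n] (G : Matrix m n ℝ) (P : Matrix m m ℝ)
    (hPsym : Pᵀ = P) (hPP : P * P = P) :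
    frobSq (G - P * G) ≤ frobSq G := by
  have h2 : G = (G - P * G) + P * G := by abel
  have hcross : frobInner (G - P * G) (P * G) = 0 := by
    rw [frobInner_eq_trace']
    have : (G - P * G)ᵀ * (P * G) = Gᵀ * (P * G) - Gᵀ * (P * (P * G)) := by
      rw [Matrix.transpose_sub, Matrix.transpose_mul, hPsym]
      simp only [Matrix.sub_mul, Matrix.mul_assoc]
    rw [this, show Gᵀ * (P * (P * G)) = Gᵀ * (P * P * G) by simp only [Matrix.mul_assoc], hPP,
      sub_self, Matrix.trace_zero]
  conv_rhs => rw [h2]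
  rw [frobSq_add, hcross]
  have := frobSq_nonneg (P * G)
  linarith

lemma split2 {m n : Type*} [Fintype m] [Fintype n] (F Fhat : Matrix m n ℝ) (P : Matrix m m ℝ)
    (hPsym : Pᵀ = P) (hPP : P * P = P) (hFhat : P * Fhat = Fhat) :
    frobSq (F - P * F) ≤ frobSq (F - Fhat) := by
  have h1 : F - P * F = (F - Fhat) - P * (F - Fhat) := by
    rw [Matrix.mul_sub, hFhat]; abel
  rw [h1]
  exact split2aux (F - Fhat) P hPsym hPP
lemma expect_sq {n mm c₂ : ℕ} (p : Fin n → ℝ) (hp1 : ∑ i, p i = 1)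
    (Z : Fin n → Fin mm → ℝ) (hmean : ∀ k, ∑ i, p i * Z i k = 0) :
    ∑ f : Fin c₂ → Fin n, (∏ l, p (f l)) * (∑ k, (∑ l, Z (f l) k) ^ 2)
      = c₂ * ∑ i, p i * ∑ k, (Z i k) ^ 2 := by
  have key : ∀ (k : Fin mm) (l₀ l₁ : Fin c₂),
      (∑ f : Fin c₂ → Fin n, (∏ l, p (f l)) * (Z (f l₀) k * Z (f l₁) k))
        = if l₀ = l₁ then ∑ i, p i * (Z i k) ^ 2 else 0 := by
    intro k l₀ l₁
    have h1 : ∀ f : Fin c₂ → Fin n, (∏ l, p (f l)) * (Z (f l₀) k * Z (f l₁) k)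
        = ∏ l, (p (f l) *
            ((if l = l₀ then Z (f l) k else 1) * (if l = l₁ then Z (f l) k else 1))) := by
      intro f
      rw [Finset.prod_mul_distrib, Finset.prod_mul_distrib,
        Finset.prod_ite_eq' Finset.univ l₀ (fun l => Z (f l) k),
        Finset.prod_ite_eq' Finset.univ l₁ (fun l => Z (f l) k)]
      simp
    rw [Finset.sum_congr rfl (fun f _ => h1 f)]
    rw [← Fintype.prod_sum (fun (l : Fin c₂) (j : Fin n) =>
      p j * ((if l = l₀ then Z j k else 1) * (if l = l₁ then Z j k else 1)))]
    have h2 : ∀ l : Fin c₂, (∑ j, p j *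
        ((if l = l₀ then Z j k else 1) * (if l = l₁ then Z j k else 1)))
        = if l = l₀ then (if l = l₁ then ∑ j, p j * (Z j k) ^ 2 else 0)
          else (if l = l₁ then 0 else 1) := by
      intro l
      split_ifs with h h'
      · apply Finset.sum_congr rfl; intro j _; ring
      · simp only [mul_one]; exact hmean k
      · simp only [one_mul]; exact hmean k
      · simp only [mul_one, one_mul]; exact hp1
    rw [Finset.prod_congr rfl (fun l _ => h2 l)]
    by_cases hll : l₀ = l₁
    · subst hll
      rw [if_pos rfl]
      have : ∀ l : Fin c₂, (if l = l₀ then (if l = l₀ then ∑ j, p j * (Z j k) ^ 2 else 0)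
          else (if l = l₀ then 0 else 1))
          = if l = l₀ then ∑ j, p j * (Z j k) ^ 2 else 1 := by
        intro l; split_ifs <;> rfl
      rw [Finset.prod_congr rfl (fun l _ => this l)]
      exact (Finset.prod_ite_eq' Finset.univ l₀ (fun _ => ∑ j, p j * (Z j k) ^ 2)).trans (by simp)
    · rw [if_neg hll]
      apply Finset.prod_eq_zero (Finset.mem_univ l₀)
      rw [if_pos rfl, if_neg hll]
  -- now assemble
  have expand : ∀ f : Fin c₂ → Fin n, (∏ l, p (f l)) * (∑ k, (∑ l, Z (f l) k) ^ 2)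
      = ∑ k, ∑ l₀, ∑ l₁, (∏ l, p (f l)) * (Z (f l₀) k * Z (f l₁) k) := by
    intro f
    rw [Finset.mul_sum]
    apply Finset.sum_congr rfl; intro k _
    rw [sq, Finset.sum_mul_sum, Finset.mul_sum]
    apply Finset.sum_congr rfl; intro l₀ _
    rw [Finset.mul_sum]
  rw [Finset.sum_congr rfl (fun f _ => expand f)]
  rw [Finset.sum_comm]
  have swap2 : ∀ k : Fin mm, (∑ f : Fin c₂ → Fin n, ∑ l₀, ∑ l₁,
      (∏ l, p (f l)) * (Z (f l₀) k * Z (f l₁) k))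
      = ∑ l₀, ∑ l₁, ∑ f : Fin c₂ → Fin n, (∏ l, p (f l)) * (Z (f l₀) k * Z (f l₁) k) := by
    intro k
    rw [Finset.sum_comm]
    apply Finset.sum_congr rfl; intro l₀ _
    rw [Finset.sum_comm]
  rw [Finset.sum_congr rfl (fun k _ => swap2 k)]
  have diag : ∀ k : Fin mm, (∑ l₀, ∑ l₁ : Fin c₂, ∑ f : Fin c₂ → Fin n,
      (∏ l, p (f l)) * (Z (f l₀) k * Z (f l₁) k)) = c₂ * ∑ i, p i * (Z i k) ^ 2 := by
    intro k
    rw [Finset.sum_congr rfl (fun l₀ _ => Finset.sum_congr rfl (fun l₁ _ => key k l₀ l₁))]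
    rw [Finset.sum_congr rfl (fun l₀ _ => Finset.sum_ite_eq Finset.univ l₀
      (fun _ => ∑ i, p i * (Z i k) ^ 2))]
    simp [Finset.sum_const, Finset.card_univ, mul_comm]
  rw [Finset.sum_congr rfl (fun k _ => diag k)]
  rw [← Finset.mul_sum, Finset.sum_comm]
  congr 1
  apply Finset.sum_congr rfl; intro i _
  rw [Finset.mul_sum]
lemma mul_vecMulVec {m n k : ℕ} (M : Matrix (Fin m) (Fin k) ℝ) (u : Fin k → ℝ)
    (w : Fin n → ℝ) : M * vecMulVec u w = vecMulVec (M *ᵥ u) w := by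
  ext i j
  simp [Matrix.mul_apply, vecMulVec_apply, Matrix.mulVec, dotProduct, Finset.sum_mul,
    mul_assoc]
lemma frobSq_sum_vecMulVec {m n ρ : ℕ} (v : Fin ρ → Fin n → ℝ)
    (hON : ∀ s t, (∑ j, v s j * v t j) = if s = t then 1 else 0) (z : Fin ρ → Fin m → ℝ) :
    frobSq (∑ t, vecMulVec (z t) (v t)) = ∑ t, ∑ k, (z t k) ^ 2 := by
  rw [frobSq]
  have hk : ∀ k : Fin m, (∑ j, ((∑ t, vecMulVec (z t) (v t)) k j) ^ 2) = ∑ t, (z t k) ^ 2 := by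
    intro k
    have h1 : ∀ j, ((∑ t, vecMulVec (z t) (v t)) k j) ^ 2
        = ∑ t, ∑ s, (z t k * z s k) * (v t j * v s j) := by
      intro j
      rw [Matrix.sum_apply, sq, Finset.sum_mul_sum]
      apply Finset.sum_congr rfl; intro t _
      apply Finset.sum_congr rfl; intro s _
      simp [vecMulVec_apply]; ring
    rw [Finset.sum_congr rfl (fun j _ => h1 j), Finset.sum_comm]
    have h2 : ∀ t, (∑ j, ∑ s, (z t k * z s k) * (v t j * v s j)) = (z t k) ^ 2 := by
      intro t
      rw [Finset.sum_comm]
      have h3 : ∀ s, (∑ j, (z t k * z s k) * (v t j * v s j))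
          = (z t k * z s k) * (if t = s then 1 else 0) := by
        intro s
        rw [← hON t s, Finset.mul_sum]
      rw [Finset.sum_congr rfl (fun s _ => h3 s)]
      rw [Finset.sum_congr rfl (fun s _ => mul_ite (t = s) (z t k * z s k) (1:ℝ) 0)]
      simp only [mul_one, mul_zero]
      rw [Finset.sum_ite_eq Finset.univ t (fun s => z t k * z s k)]
      simp [sq]
    exact Finset.sum_congr rfl (fun t _ => h2 t)
  rw [Finset.sum_congr rfl (fun k _ => hk k), Finset.sum_comm]
set_option maxHeartbeats 1600000 in
/-- (Adaptive sampling bound, generalized version.) With `R` consisting of rows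
of `A` such that `rank R = rank (A R⁺ R) = ρ`, `C₁` consisting of columns of `A`,
residual `B = A - C₁C₁⁺A`, sampling probabilities `p_i = ‖b_i‖₂²/‖B‖_F²`, and `C = [C₁, C₂]`
where `C₂` consists of `c₂` columns of `A` sampled i.i.d. according to `p`,
`E‖A - C C⁺ A R⁺ R‖_F² ≤ ‖A - A R⁺ R‖_F² + (ρ/c₂) ‖A - C₁ C₁⁺ A‖_F²`. -/
theorem stmt6 {m n r c₁ c₂ ρ : ℕ} (hc₂ : 0 < c₂)
    (A : Matrix (Fin m) (Fin n) ℝ) (R : Matrix (Fin r) (Fin n) ℝ)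
    (C₁ : Matrix (Fin m) (Fin c₁) ℝ)
    (hR : ∀ i, ∃ j, ∀ t, R i t = A j t)
    (hC₁ : ∀ j, ∃ i, ∀ t, C₁ t j = A t i)
    (hrankR : R.rank = ρ) (hrankAR : (A * mpinv R * R).rank = ρ)
    (B : Matrix (Fin m) (Fin n) ℝ) (hB : B = A - C₁ * mpinv C₁ * A)
    (p : Fin n → ℝ) (hp : ∀ i, p i = (∑ t, (B t i) ^ 2) / frobSq B)
    (C : (Fin c₂ → Fin n) → Matrix (Fin m) (Fin c₁ ⊕ Fin c₂) ℝ)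
    (hC : ∀ f, C f = Matrix.of fun t j => Sum.elim (fun a => C₁ t a) (fun l => A t (f l)) j) :
    ∑ f : Fin c₂ → Fin n, (∏ l, p (f l)) *
        frobSq (A - C f * mpinv (C f) * A * mpinv R * R)
      ≤ frobSq (A - A * mpinv R * R) + ((ρ : ℝ) / c₂) * frobSq (A - C₁ * mpinv C₁ * A) := by
  classical
  by_cases hS0 : frobSq B = 0
  · -- degenerate case : B = 0
    have hp0 : ∀ i, p i = 0 := fun i => by rw [hp i, hS0, div_zero]
    have hprod : ∀ f : Fin c₂ → Fin n, (∏ l, p (f l)) = 0 := fun f =>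
      Finset.prod_eq_zero (Finset.mem_univ (⟨0, hc₂⟩ : Fin c₂)) (hp0 _)
    rw [Finset.sum_congr rfl (fun f _ => by rw [hprod f, zero_mul]), Finset.sum_const_zero]
    have h1 := frobSq_nonneg (A - A * mpinv R * R)
    have h2 := frobSq_nonneg (A - C₁ * mpinv C₁ * A)
    have h3 : (0:ℝ) ≤ (ρ : ℝ) / c₂ := by positivity
    nlinarith
  -- main case
  obtain ⟨hR1, hR2, hR3, hR4⟩ := mpinv_spec R
  obtain ⟨hC11, hC12, hC13, hC14⟩ := mpinv_spec C₁
  have hc₂R : (c₂ : ℝ) ≠ 0 := Nat.cast_ne_zero.mpr hc₂.ne'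
  have hQsym : (mpinv R * R)ᵀ = mpinv R * R := hR4
  have hQQ : (mpinv R * R) * (mpinv R * R) = mpinv R * R := by
    rw [show (mpinv R * R) * (mpinv R * R) = mpinv R * (R * mpinv R * R) by
      simp only [Matrix.mul_assoc], hR1]
  have hrkQ : (mpinv R * R).rank = ρ := by
    have h1 : (mpinv R * R).rank ≤ ρ := hrankR ▸ Matrix.rank_mul_le_right _ _
    have h2 : ρ ≤ (mpinv R * R).rank := by
      have hRR : R = R * (mpinv R * R) := by rw [← Matrix.mul_assoc, hR1]
      calc ρ = R.rank := hrankR.symm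
      _ = (R * (mpinv R * R)).rank := by rw [← hRR]
      _ ≤ (mpinv R * R).rank := Matrix.rank_mul_le_right _ _
    omega
  obtain ⟨v, hON, hQv⟩ := proj_orthonormal_decomp (mpinv R * R) hQsym hQQ hrkQ
  set S := frobSq B with hSdef
  have hSpos : 0 < S := lt_of_le_of_ne (frobSq_nonneg B) (Ne.symm hS0)
  have hpnn : ∀ i, 0 ≤ p i := fun i => by
    rw [hp i]
    apply div_nonneg _ hSpos.le
    exact Finset.sum_nonneg fun t _ => sq_nonneg _
  have hprodnn : ∀ f : Fin c₂ → Fin n, 0 ≤ ∏ l, p (f l) := fun f =>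
    Finset.prod_nonneg fun l _ => hpnn _
  have hp1 : ∑ i, p i = 1 := by
    rw [Finset.sum_congr rfl (fun i _ => hp i), ← Finset.sum_div]
    rw [show (∑ i, ∑ t, (B t i) ^ 2) = frobSq B from Finset.sum_comm, div_self hS0]
  have hcol0 : ∀ i, p i = 0 → ∀ k, B k i = 0 := by
    intro i hpi k
    rw [hp i, div_eq_zero_iff] at hpi
    rcases hpi with h | h
    · have := (Finset.sum_eq_zero_iff_of_nonneg (fun t _ => sq_nonneg (B t i))).mp h k
        (Finset.mem_univ k)
    
      exact pow_eq_zero_iff two_ne_zero |>.mp this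
    · exact absurd h hS0
  have hcolSq : ∀ i, p i ≠ 0 → (∑ k, (B k i) ^ 2) = p i * S := by
    intro i hpi
    rw [hp i, div_mul_cancel₀]
    exact hS0
  -- notation
  set Qm : Matrix (Fin n) (Fin n) ℝ := mpinv R * R with hQm
  set F : Matrix (Fin m) (Fin n) ℝ := A * Qm with hF
  set mu : Fin ρ → Fin m → ℝ := fun t => B *ᵥ v t with hmu
  set Z : Fin ρ → Fin n → Fin m → ℝ :=
    fun t i k => (v t i / (c₂ * p i)) * B k i - (1 / c₂) * mu t k with hZ
  set w : Fin ρ → (Fin c₂ → Fin n) → Fin m → ℝ :=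
    fun t f k => ∑ l, (v t (f l) / (c₂ * p (f l))) * B k (f l) with hw
  set Fhat : (Fin c₂ → Fin n) → Matrix (Fin m) (Fin n) ℝ :=
    fun f => C₁ * (mpinv C₁ * F) + ∑ t, vecMulVec (w t f) (v t) with hFhat
  -- marginal fact
  have hmuk : ∀ t k, mu t k = ∑ i, v t i * B k i := by
    intro t k
    simp only [hmu, Matrix.mulVec, dotProduct]
    exact Finset.sum_congr rfl fun i _ => mul_comm _ _
  have hmarg : ∀ t k, ∑ i, p i * ((v t i / (c₂ * p i)) * B k i) = (1 / c₂) * mu t k := by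
    intro t k
    have : ∀ i, p i * ((v t i / (c₂ * p i)) * B k i) = (1 / c₂) * (v t i * B k i) := by
      intro i
      by_cases hpi : p i = 0
      · rw [hpi, hcol0 i hpi k]; ring
      · field_simp
    rw [Finset.sum_congr rfl (fun i _ => this i), ← Finset.mul_sum, hmuk]
  have hmean : ∀ t k, ∑ i, p i * Z t i k = 0 := by
    intro t k
    have : ∀ i, p i * Z t i k
        = p i * ((v t i / (c₂ * p i)) * B k i) - p i * ((1 / c₂) * mu t k) := by
      intro i; simp only [hZ]; ring
    rw [Finset.sum_congr rfl (fun i _ => this i), Finset.sum_sub_distrib, hmarg,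
      ← Finset.sum_mul, hp1, one_mul, sub_self]
  -- the matrices P f
  have hmpC : ∀ f, IsMPInv (C f) (mpinv (C f)) := fun f => mpinv_spec (C f)
  have hPsym : ∀ f, (C f * mpinv (C f))ᵀ = C f * mpinv (C f) := fun f => (hmpC f).2.2.1
  have hPP : ∀ f, (C f * mpinv (C f)) * (C f * mpinv (C f)) = C f * mpinv (C f) := by
    intro f
    rw [show (C f * mpinv (C f)) * (C f * mpinv (C f))
      = (C f * mpinv (C f) * C f) * mpinv (C f) by simp only [Matrix.mul_assoc], (hmpC f).1]
  -- step 1 : Pythagoras split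
  have hK1 : ∀ f, frobSq (A - C f * mpinv (C f) * A * mpinv R * R)
      = frobSq (A - F) + frobSq (F - (C f * mpinv (C f)) * F) := by
    intro f
    rw [show A - C f * mpinv (C f) * A * mpinv R * R
      = A - (C f * mpinv (C f)) * A * Qm by rw [hQm]; simp only [Matrix.mul_assoc]]
    rw [split1 A Qm (C f * mpinv (C f)) hQsym hQQ, hF]
  -- C₁ as a submatrix of C f
  set J : Matrix (Fin c₁ ⊕ Fin c₂) (Fin c₁) ℝ :=
    Matrix.of fun s a => Sum.elim (fun a' => if a' = a then (1:ℝ) else 0) (fun _ => 0) s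
    with hJdef
  have hCJ : ∀ f, C f * J = C₁ := by
    intro f
    ext t a
    rw [Matrix.mul_apply, Fintype.sum_sum_type]
    simp only [hJdef, Matrix.of_apply, Sum.elim_inl, Sum.elim_inr, mul_zero,
      Finset.sum_const_zero, add_zero, mul_ite, mul_one]
    rw [Finset.sum_ite_eq' Finset.univ a (fun a' => C f t (Sum.inl a'))]
    simp [hC f]
  have hPC₁ : ∀ f, (C f * mpinv (C f)) * C₁ = C₁ := by
    intro f
    rw [← hCJ f, ← Matrix.mul_assoc, (hmpC f).1]
  have hPacol : ∀ f (l : Fin c₂),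
      (C f * mpinv (C f)) *ᵥ (fun k => A k (f l)) = fun k => A k (f l) := by
    intro f l
    have h1 : (fun k => A k (f l)) = C f *ᵥ Pi.single (Sum.inr l) 1 := by
      funext k
      simp [Matrix.mulVec_single, hC f]
    rw [h1, Matrix.mulVec_mulVec, (hmpC f).1]
  have hPbcol : ∀ f (l : Fin c₂),
      (C f * mpinv (C f)) *ᵥ (fun k => B k (f l)) = fun k => B k (f l) := by
    intro f l
    have hb : (fun k => B k (f l))
        = (fun k => A k (f l)) - (C₁ * mpinv C₁) *ᵥ (fun k => A k (f l)) := by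
      funext k
      rw [hB]
      simp only [Matrix.sub_apply, Pi.sub_apply]
      simp [Matrix.mul_apply, Matrix.mulVec, dotProduct]
    rw [hb, Matrix.mulVec_sub, hPacol f l, Matrix.mulVec_mulVec, ← Matrix.mul_assoc, hPC₁ f]
  have hPw : ∀ f t, (C f * mpinv (C f)) *ᵥ (w t f) = w t f := by
    intro f t
    have hwsum : w t f = ∑ l, (v t (f l) / (c₂ * p (f l))) • (fun k => B k (f l)) := by
      funext k
      simp only [hw, Finset.sum_apply, Pi.smul_apply, smul_eq_mul]
    rw [hwsum, ← Matrix.mulVecLin_apply, map_sum]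
    apply Finset.sum_congr rfl; intro l _
    rw [LinearMap.map_smul, Matrix.mulVecLin_apply, hPbcol f l]
  have hK2 : ∀ f, (C f * mpinv (C f)) * Fhat f = Fhat f := by
    intro f
    simp only [hFhat]
    rw [Matrix.mul_add]
    congr 1
    · rw [← Matrix.mul_assoc, hPC₁ f]
    · rw [Matrix.mul_sum]
      exact Finset.sum_congr rfl fun t _ => by rw [_root_.mul_vecMulVec, hPw f t]
  have hBQm : B * Qm = F - C₁ * (mpinv C₁ * F) := by
    rw [hB, hF, Matrix.sub_mul]
    simp only [Matrix.mul_assoc]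
  have hBQe : ∀ k j, (B * Qm) k j = ∑ t, mu t k * v t j := by
    intro k j
    rw [Matrix.mul_apply]
    have h1 : ∀ a, B k a * Qm a j = ∑ t, (B k a * v t a) * v t j := by
      intro a; rw [hQv a j, Finset.mul_sum]
      exact Finset.sum_congr rfl fun t _ => by ring
    rw [Finset.sum_congr rfl (fun a _ => h1 a), Finset.sum_comm]
    apply Finset.sum_congr rfl; intro t _
    rw [hmuk, ← Finset.sum_mul]
    congr 1
    exact Finset.sum_congr rfl fun a _ => mul_comm _ _
  have hK3 : ∀ f, F - Fhat f = ∑ t, vecMulVec (fun k => mu t k - w t f k) (v t) := by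
    intro f
    ext k j
    simp only [hFhat, Matrix.sub_apply, Matrix.add_apply, Matrix.sum_apply, vecMulVec_apply]
    have h1 : F k j - (C₁ * (mpinv C₁ * F)) k j = ∑ t, mu t k * v t j := by
      rw [← hBQe k j, hBQm]; simp [Matrix.sub_apply]
    rw [show F k j - ((C₁ * (mpinv C₁ * F)) k j + ∑ t, w t f k * v t j)
      = (F k j - (C₁ * (mpinv C₁ * F)) k j) - ∑ t, w t f k * v t j by ring, h1,
      ← Finset.sum_sub_distrib]
    exact Finset.sum_congr rfl fun t _ => by ring
  have hK4 : ∀ f, frobSq (F - Fhat f) = ∑ t, ∑ k, (∑ l, Z t (f l) k) ^ 2 := by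
    intro f
    rw [hK3 f, frobSq_sum_vecMulVec v hON]
    apply Finset.sum_congr rfl; intro t _
    apply Finset.sum_congr rfl; intro k _
    have hZsum : ∑ l, Z t (f l) k = w t f k - mu t k := by
      simp only [hZ, hw]
      rw [Finset.sum_sub_distrib, Finset.sum_const, Finset.card_univ, Fintype.card_fin,
        nsmul_eq_mul]
      field_simp
    rw [hZsum]; ring
  have hK7 : ∀ t, ∑ i, p i * ∑ k, (Z t i k) ^ 2 ≤ S / (c₂:ℝ) ^ 2 := by
    intro t
    have hk : ∀ k, ∑ i, p i * (Z t i k) ^ 2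
        ≤ ∑ i, p i * ((v t i / (c₂ * p i)) * B k i) ^ 2 := by
      intro k
      have hexp : ∀ i, p i * (Z t i k) ^ 2
          = p i * ((v t i / (c₂ * p i)) * B k i) ^ 2
            - 2 * ((1/(c₂:ℝ)) * mu t k) * (p i * ((v t i / (c₂ * p i)) * B k i))
            + p i * ((1/(c₂:ℝ)) * mu t k) ^ 2 := by
        intro i; simp only [hZ]; ring
      rw [Finset.sum_congr rfl (fun i _ => hexp i), Finset.sum_add_distrib,
        Finset.sum_sub_distrib, ← Finset.mul_sum, hmarg t k, ← Finset.sum_mul, hp1, one_mul]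
      nlinarith [sq_nonneg ((1/(c₂:ℝ)) * mu t k)]
    have hcolb : ∀ i, p i * ∑ k, ((v t i / (c₂ * p i)) * B k i) ^ 2
        ≤ (v t i) ^ 2 * (S / (c₂:ℝ) ^ 2) := by
      intro i
      by_cases hpi : p i = 0
      · have hz : ∀ k, ((v t i / (c₂ * p i)) * B k i) ^ 2 = 0 := fun k => by
          rw [hcol0 i hpi k]; ring
        rw [Finset.sum_congr rfl (fun k _ => hz k), Finset.sum_const_zero, mul_zero]
        positivity
      · have h1 : ∑ k, ((v t i / (c₂ * p i)) * B k i) ^ 2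
            = (v t i / (c₂ * p i)) ^ 2 * (p i * S) := by
          rw [← hcolSq i hpi, Finset.mul_sum]
          exact Finset.sum_congr rfl fun k _ => by ring
        rw [h1, show p i * ((v t i / (c₂ * p i)) ^ 2 * (p i * S)) = (v t i)^2 * (S / (c₂:ℝ)^2) by
          field_simp]
    calc ∑ i, p i * ∑ k, (Z t i k) ^ 2
        = ∑ k, ∑ i, p i * (Z t i k) ^ 2 := by
          rw [Finset.sum_congr rfl (fun i (_ : i ∈ Finset.univ) =>
            Finset.mul_sum Finset.univ (fun k => (Z t i k)^2) (p i)), Finset.sum_comm]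
      _ ≤ ∑ k, ∑ i, p i * ((v t i / (c₂ * p i)) * B k i) ^ 2 :=
          Finset.sum_le_sum fun k _ => hk k
      _ = ∑ i, p i * ∑ k, ((v t i / (c₂ * p i)) * B k i) ^ 2 := by
          rw [Finset.sum_comm]
          exact Finset.sum_congr rfl fun i _ =>
            (Finset.mul_sum Finset.univ (fun k => ((v t i / (c₂ * p i)) * B k i)^2) (p i)).symm
      _ ≤ ∑ i, (v t i) ^ 2 * (S / (c₂:ℝ) ^ 2) := Finset.sum_le_sum fun i _ => hcolb i
      _ = (∑ i, v t i * v t i) * (S / (c₂:ℝ) ^ 2) := by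
          rw [Finset.sum_mul]
          exact Finset.sum_congr rfl fun i _ => by ring
      _ = S / (c₂:ℝ) ^ 2 := by rw [hON t t, if_pos rfl, one_mul]
  have hsum1 : ∑ f : Fin c₂ → Fin n, (∏ l, p (f l)) = 1 := by
    rw [← Fintype.prod_sum (fun (_ : Fin c₂) (j : Fin n) => p j)]
    simp [hp1]
  rw [Finset.sum_congr rfl (fun f _ => by rw [hK1 f])]
  rw [show A - A * mpinv R * R = A - F by rw [hF, hQm, Matrix.mul_assoc], ← hB, ← hSdef]
  rw [Finset.sum_congr rfl (fun f (_ : f ∈ Finset.univ) =>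
    mul_add (∏ l, p (f l)) (frobSq (A - F)) (frobSq (F - (C f * mpinv (C f)) * F))),
    Finset.sum_add_distrib, ← Finset.sum_mul, hsum1, one_mul]
  have hmain : ∑ f : Fin c₂ → Fin n, (∏ l, p (f l)) * frobSq (F - (C f * mpinv (C f)) * F)
      ≤ (ρ:ℝ)/(c₂:ℝ) * S := by
    calc ∑ f : Fin c₂ → Fin n, (∏ l, p (f l)) * frobSq (F - (C f * mpinv (C f)) * F)
        ≤ ∑ f : Fin c₂ → Fin n, (∏ l, p (f l)) * (∑ t, ∑ k, (∑ l, Z t (f l) k) ^ 2) := by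
          apply Finset.sum_le_sum; intro f _
          apply mul_le_mul_of_nonneg_left _ (hprodnn f)
          rw [← hK4 f]
          exact split2 F (Fhat f) _ (hPsym f) (hPP f) (hK2 f)
      _ = ∑ t, ∑ f : Fin c₂ → Fin n, (∏ l, p (f l)) * (∑ k, (∑ l, Z t (f l) k) ^ 2) := by
          rw [Finset.sum_congr rfl (fun f (_ : f ∈ Finset.univ) =>
            Finset.mul_sum Finset.univ
              (fun t => ∑ k, (∑ l, Z t (f l) k) ^ 2) (∏ l, p (f l))), Finset.sum_comm]
      _ = ∑ t : Fin ρ, (c₂ : ℝ) * ∑ i, p i * ∑ k, (Z t i k) ^ 2 :=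
          Finset.sum_congr rfl fun t _ => expect_sq p hp1 (Z t) (hmean t)
      _ ≤ ∑ t : Fin ρ, (c₂ : ℝ) * (S / (c₂:ℝ) ^ 2) :=
          Finset.sum_le_sum fun t _ => mul_le_mul_of_nonneg_left (hK7 t) (by positivity)
      _ = (ρ:ℝ)/(c₂:ℝ) * S := by
          rw [Finset.sum_const, Finset.card_univ, Fintype.card_fin, nsmul_eq_mul]
          have hcc : (c₂:ℝ) * (S / (c₂:ℝ) ^ 2) = S / (c₂:ℝ) := by
            rw [pow_two]; field_simp
          rw [hcc]; ring
  linarith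
end
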